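/- Let p ≥ 5 be a prime with p ≡ 2 (mod 3). Let θ ∈ ℚ_p and q ∈ ℕ satisfy |θ−1|_p < 1, |(q:ℚ_p)|_p < 1 and (θ−1)(1−θ−q) ≠ 0. Then the cubic equation y³ − (1+θ+θ²)y² − (2θ+1)(1−θ−q)y − (1−θ−q)² = 0 has no root y ∈ ℚ_p with |y|_p < 1. -/

import Mathlib

lemma no_sq_neg_three (p : ℕ) [Fact (Nat.Prime p)] (hp5 : 5 ≤ p) (hp3 : p % 3 = 2) :
    ¬ IsSquare (-3 : ZMod p) := by
  rintro ⟨s, hs⟩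
  have hp : p.Prime := Fact.out
  have hcast : ∀ n : ℕ, 0 < n → n < p → ((n : ZMod p) ≠ 0) := by
    intro n hn hnp h
    rw [ZMod.natCast_eq_zero_iff] at h
    have := Nat.le_of_dvd hn h
    omega
  have h2 : (2 : ZMod p) ≠ 0 := by exact_mod_cast hcast 2 (by norm_num) (by omega)
  have h3 : (3 : ZMod p) ≠ 0 := by exact_mod_cast hcast 3 (by norm_num) (by omega)
  have h4 : (4 : ZMod p) ≠ 0 := by exact_mod_cast hcast 4 (by norm_num) (by omega)
  set ω : ZMod p := (s - 1) * (2 : ZMod p)⁻¹ with hω_def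
  have h2ω : 2 * ω = s - 1 := by
    rw [hω_def]
    field_simp
  have h4' : (4 : ZMod p) * (ω ^ 2 + ω + 1) = 0 := by
    linear_combination (2 * ω + 1 + s) * h2ω - hs
  have hω : ω ^ 2 + ω + 1 = 0 := by
    rcases mul_eq_zero.mp h4' with h | h
    · exact absurd h h4
    · exact h
  have hω1 : ω ≠ 1 := by
    intro h
    rw [h] at hω
    apply h3
    linear_combination hω
  have hω0 : ω ≠ 0 := by
    intro h
    rw [h] at hω
    simp at hω
  have hω3 : ω ^ 3 = 1 := by linear_combination (ω - 1) * hω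
  have ho3 : orderOf ω ∣ 3 := orderOf_dvd_of_pow_eq_one hω3
  have ho : orderOf ω = 3 := by
    rcases (Nat.prime_three).eq_one_or_self_of_dvd _ ho3 with h | h
    · exact absurd (orderOf_eq_one_iff.mp h) hω1
    · exact h
  have hferm : ω ^ (p - 1) = 1 := ZMod.pow_card_sub_one_eq_one hω0
  have hdvd : orderOf ω ∣ p - 1 := orderOf_dvd_of_pow_eq_one hferm
  rw [ho] at hdvd
  omega

/-- for `p ≡ 2 (mod 3)` the cubic has no root of norm `< 1`. -/
theorem potts_bethe_cubic_no_small_root (p : ℕ) [Fact (Nat.Prime p)]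
    (hp5 : 5 ≤ p) (hp3 : p % 3 = 2) (θ : ℚ_[p]) (q : ℕ)
    (hθ : ‖θ - 1‖ < 1) (hq : ‖(q : ℚ_[p])‖ < 1)
    (hne : (θ - 1) * (1 - θ - (q : ℚ_[p])) ≠ 0) :
    ¬ ∃ y : ℚ_[p],
      y ^ 3 - (1 + θ + θ ^ 2) * y ^ 2 - (2 * θ + 1) * (1 - θ - (q : ℚ_[p])) * y
        - (1 - θ - (q : ℚ_[p])) ^ 2 = 0 ∧ ‖y‖ < 1 := by
  rintro ⟨y, heq, hy⟩
  set b : ℚ_[p] := 1 - θ - (q : ℚ_[p]) with hb_def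
  have hbne : b ≠ 0 := right_ne_zero_of_mul hne
  have sub_le : ∀ x z : ℚ_[p], ‖x - z‖ ≤ max ‖x‖ ‖z‖ := by
    intro x z
    rw [sub_eq_add_neg]
    simpa [norm_neg] using Padic.nonarchimedean x (-z)
  have hb : ‖b‖ < 1 := by
    have hb' : b = -(θ - 1) - (q : ℚ_[p]) := by rw [hb_def]; ring
    rw [hb']
    calc ‖-(θ - 1) - (q : ℚ_[p])‖ ≤ max ‖-(θ - 1)‖ ‖(q : ℚ_[p])‖ := sub_le _ _
      _ < 1 := by rw [norm_neg]; exact max_lt hθ hq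
  have hbpos : 0 < ‖b‖ := norm_pos_iff.mpr hbne
  have h2le : ‖(2 : ℚ_[p])‖ ≤ 1 := by
    have := Padic.norm_int_le_one (p := p) 2
    push_cast at this
    exact this
  have hθn : ‖θ‖ ≤ 1 := by
    have : θ = (θ - 1) + 1 := by ring
    rw [this]
    refine le_trans (Padic.nonarchimedean _ _) (max_le hθ.le (by simp))
  have hθ2 : ‖θ + 2‖ ≤ 1 :=
    le_trans (Padic.nonarchimedean θ 2) (max_le hθn h2le)
  have h3 : ‖(3 : ℚ_[p])‖ = 1 := by
    have h1 : ‖((3 : ℤ) : ℚ_[p])‖ ≤ 1 := Padic.norm_int_le_one 3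
    have hnd : ¬ ((p : ℤ) ∣ 3) := by
      intro h
      have := Int.le_of_dvd (by norm_num) h
      omega
    have h4 := (Padic.norm_intCast_lt_one_iff (k := 3)).not.mpr hnd
    push_cast at h1 h4
    exact le_antisymm h1 (not_lt.mp h4)
  have norm3small : ∀ x : ℚ_[p], ‖x‖ < 1 → ‖(3 : ℚ_[p]) + x‖ = 1 := by
    intro x hx
    have hne' : ‖(3 : ℚ_[p])‖ ≠ ‖x‖ := by rw [h3]; exact ne_of_gt hx
    rw [Padic.add_eq_max_of_ne hne', h3]
    exact max_eq_left hx.le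
  have hA : ‖(1 : ℚ_[p]) + θ + θ ^ 2‖ = 1 := by
    have key : (1 : ℚ_[p]) + θ + θ ^ 2 = 3 + (θ - 1) * (θ + 2) := by ring
    rw [key]
    refine norm3small _ ?_
    rw [norm_mul]
    calc ‖θ - 1‖ * ‖θ + 2‖ ≤ ‖θ - 1‖ := mul_le_of_le_one_right (norm_nonneg _) hθ2
      _ < 1 := hθ
  have hB : ‖(2 : ℚ_[p]) * θ + 1‖ = 1 := by
    have key : (2 : ℚ_[p]) * θ + 1 = 3 + 2 * (θ - 1) := by ring
    rw [key]
    refine norm3small _ ?_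
    rw [norm_mul]
    calc ‖(2 : ℚ_[p])‖ * ‖θ - 1‖ ≤ ‖θ - 1‖ := mul_le_of_le_one_left (norm_nonneg _) h2le
      _ < 1 := hθ
  rcases lt_trichotomy ‖y‖ ‖b‖ with hlt | heqn | hgt
  · -- case ‖y‖ < ‖b‖ : the term b^2 dominates
    have e1 : b ^ 2 = y ^ 3 - (1 + θ + θ ^ 2) * y ^ 2 - (2 * θ + 1) * b * y := by
      linear_combination -heq
    have hbound : ‖b‖ ^ 2 ≤ max (max (‖y‖ ^ 3) (‖y‖ ^ 2)) (‖b‖ * ‖y‖) := by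
      have h1 : ‖b ^ 2‖ ≤ max (max ‖y ^ 3‖ ‖(1 + θ + θ ^ 2) * y ^ 2‖)
          ‖(2 * θ + 1) * b * y‖ := by
        rw [e1]
        exact le_trans (sub_le _ _) (max_le_max (sub_le _ _) le_rfl)
      rw [norm_pow, norm_pow, norm_mul, norm_mul, norm_mul, hA, hB,
        norm_pow, one_mul, one_mul] at h1
      exact h1
    have t2 : ‖y‖ ^ 2 < ‖b‖ ^ 2 := pow_lt_pow_left₀ hlt (norm_nonneg y) (by norm_num)
    have t1 : ‖y‖ ^ 3 < ‖b‖ ^ 2 := by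
      nlinarith [mul_nonneg (mul_nonneg (norm_nonneg y) (norm_nonneg y)) (sub_pos.mpr hy).le, t2]
    have t3 : ‖b‖ * ‖y‖ < ‖b‖ ^ 2 := by
      calc ‖b‖ * ‖y‖ < ‖b‖ * ‖b‖ := mul_lt_mul_of_pos_left hlt hbpos
        _ = ‖b‖ ^ 2 := (pow_two _).symm
    have := max_lt (max_lt t1 t2) t3
    linarith
  · -- case ‖y‖ = ‖b‖ : reduce mod p and get a square root of -3
    have hyne : y ≠ 0 := by
      intro h
      apply hbne
      rw [← norm_eq_zero, ← heqn, h, norm_zero]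
    set t : ℚ_[p] := y / b with ht_def
    have ht : ‖t‖ = 1 := by
      rw [ht_def, norm_div, heqn, div_self (ne_of_gt hbpos)]
    have h2 : b * t ^ 3 - (1 + θ + θ ^ 2) * t ^ 2 - (2 * θ + 1) * t - 1 = 0 := by
      have hcalc : b * t ^ 3 - (1 + θ + θ ^ 2) * t ^ 2 - (2 * θ + 1) * t - 1
          = (y ^ 3 - (1 + θ + θ ^ 2) * y ^ 2 - (2 * θ + 1) * b * y - b ^ 2) / b ^ 2 := by
        rw [ht_def]
        field_simp
      rw [hcalc, heq, zero_div]
    have key : 3 * t ^ 2 + 3 * t + 1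
        = b * t ^ 3 - (θ - 1) * (θ + 2) * t ^ 2 - 2 * (θ - 1) * t := by
      linear_combination -h2
    have hksmall : ‖(3 : ℚ_[p]) * t ^ 2 + 3 * t + 1‖ < 1 := by
      rw [key]
      have n1 : ‖b * t ^ 3‖ < 1 := by
        rw [norm_mul, norm_pow, ht, one_pow, mul_one]; exact hb
      have n2 : ‖(θ - 1) * (θ + 2) * t ^ 2‖ < 1 := by
        rw [norm_mul, norm_mul, norm_pow, ht, one_pow, mul_one]
        calc ‖θ - 1‖ * ‖θ + 2‖ ≤ ‖θ - 1‖ := mul_le_of_le_one_right (norm_nonneg _) hθ2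
          _ < 1 := hθ
      have n3 : ‖(2 : ℚ_[p]) * (θ - 1) * t‖ < 1 := by
        rw [norm_mul, norm_mul, ht, mul_one]
        calc ‖(2 : ℚ_[p])‖ * ‖θ - 1‖ ≤ ‖θ - 1‖ := mul_le_of_le_one_left (norm_nonneg _) h2le
          _ < 1 := hθ
      calc ‖b * t ^ 3 - (θ - 1) * (θ + 2) * t ^ 2 - 2 * (θ - 1) * t‖
          ≤ max (max ‖b * t ^ 3‖ ‖(θ - 1) * (θ + 2) * t ^ 2‖) ‖(2 : ℚ_[p]) * (θ - 1) * t‖ :=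
            le_trans (sub_le _ _) (max_le_max (sub_le _ _) le_rfl)
        _ < 1 := max_lt (max_lt n1 n2) n3
    -- lift t to ℤ_[p]
    set T : ℤ_[p] := ⟨t, le_of_eq ht⟩ with hT_def
    have hXnorm : ‖(3 * T ^ 2 + 3 * T + 1 : ℤ_[p])‖ < 1 := by
      have hco : ((3 * T ^ 2 + 3 * T + 1 : ℤ_[p]) : ℚ_[p]) = 3 * t ^ 2 + 3 * t + 1 := by
        push_cast
        rfl
      rw [PadicInt.norm_def, hco]
      exact hksmall
    have hker : (3 * T ^ 2 + 3 * T + 1 : ℤ_[p]) ∈ RingHom.ker (PadicInt.toZMod (p := p)) := by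
      rw [PadicInt.ker_toZMod, IsLocalRing.mem_maximalIdeal]
      exact PadicInt.mem_nonunits.mpr hXnorm
    rw [RingHom.mem_ker] at hker
    set u : ZMod p := PadicInt.toZMod T with hu_def
    have h0 : 3 * u ^ 2 + 3 * u + 1 = 0 := by
      rw [hu_def]
      simpa [map_add, map_mul, map_pow, map_one, map_ofNat] using hker
    have hsq : IsSquare (-3 : ZMod p) :=
      ⟨6 * u + 3, by linear_combination (-12 : ZMod p) * h0⟩
    exact no_sq_neg_three p hp5 hp3 hsq
  · -- case ‖b‖ < ‖y‖ : the term y^2 dominates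
    have hypos : 0 < ‖y‖ := lt_of_le_of_lt (norm_nonneg b) hgt
    have e2 : (1 + θ + θ ^ 2) * y ^ 2 = y ^ 3 - (2 * θ + 1) * b * y - b ^ 2 := by
      linear_combination -heq
    have hbound : ‖y‖ ^ 2 ≤ max (max (‖y‖ ^ 3) (‖b‖ * ‖y‖)) (‖b‖ ^ 2) := by
      have h1 : ‖(1 + θ + θ ^ 2) * y ^ 2‖ ≤ max (max ‖y ^ 3‖ ‖(2 * θ + 1) * b * y‖)
          ‖b ^ 2‖ := by
        rw [e2]
        exact le_trans (sub_le _ _) (max_le_max (sub_le _ _) le_rfl)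
      rw [norm_mul, norm_mul, norm_mul, hA, hB, norm_pow, norm_pow,
        norm_pow, one_mul, one_mul] at h1
      exact h1
    have t1 : ‖y‖ ^ 3 < ‖y‖ ^ 2 := by
      nlinarith [mul_pos (mul_pos hypos hypos) (sub_pos.mpr hy)]
    have t2 : ‖b‖ * ‖y‖ < ‖y‖ ^ 2 := by
      calc ‖b‖ * ‖y‖ < ‖y‖ * ‖y‖ := mul_lt_mul_of_pos_right hgt hypos
        _ = ‖y‖ ^ 2 := (pow_two _).symm
    have t3 : ‖b‖ ^ 2 < ‖y‖ ^ 2 := pow_lt_pow_left₀ hgt (norm_nonneg b) (by norm_num)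
    have := max_lt (max_lt t1 t2) t3
    linarith
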